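/- For positive integers p, q, r with p + q + r − 3 even and p − q − r + 1 < 0 (assuming p ≥ q ≥ r), the trapezoidal polynomial [p][q][r] has stable part of length 0, i.e., its coefficients strictly increase up to the middle coefficient and strictly decrease after it. -/
import Mathlib


open Polynomial

/-- `qpoly n = 1 + s + ⋯ + s^(n-1)`, denoted `[n]` in the paper. -/
noncomputable def qpoly (n : ℕ) : Polynomial ℝ :=
  ∑ i ∈ Finset.range n, Polynomial.X ^ i

/-- All coefficients of `p` over its support `0, …, natDegree p` are positive. -/
def PosCoeffs (p : Polynomial ℝ) : Prop :=
  ∀ k ≤ p.natDegree, 0 < p.coeff k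

/-- `p` is symmetric: its coefficient sequence over its support reads the same
forwards and backwards. -/
def SymmetricPoly (p : Polynomial ℝ) : Prop :=
  ∀ k ≤ p.natDegree, p.coeff k = p.coeff (p.natDegree - k)

/-- `p` is trapezoidal: its coefficients strictly increase, then are constant,
then strictly decrease. -/
def Trapezoidal (p : Polynomial ℝ) : Prop :=
  ∃ i j : ℕ, i ≤ j ∧ j ≤ p.natDegree ∧
    (∀ k, k < i → p.coeff k < p.coeff (k + 1)) ∧
    (∀ k, i ≤ k → k < j → p.coeff k = p.coeff (k + 1)) ∧
    (∀ k, j ≤ k → k < p.natDegree → p.coeff (k + 1) < p.coeff k)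

/-- `p` has a run of `l + 1` equal consecutive coefficients within its support. -/
def HasRun (p : Polynomial ℝ) (l : ℕ) : Prop :=
  ∃ k0 : ℕ, k0 + l ≤ p.natDegree ∧ ∀ i ≤ l, p.coeff (k0 + i) = p.coeff k0

/-- The stable part of `p` has length `l`: `l` is the largest integer such that
some `l + 1` consecutive coefficients of `p` are all equal. -/
def StableLength (p : Polynomial ℝ) (l : ℕ) : Prop :=
  HasRun p l ∧ ∀ l', HasRun p l' → l' ≤ l

lemma coeff_qpoly (n i : ℕ) : (qpoly n).coeff i = if i < n then 1 else 0 := by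
  simp [qpoly, Polynomial.finset_sum_coeff, Polynomial.coeff_X_pow, Finset.sum_ite_eq]

lemma qpoly_ne_zero {n : ℕ} (hn : 1 ≤ n) : qpoly n ≠ 0 := by
  intro h
  have h0 := coeff_qpoly n 0
  rw [h, if_pos (by omega : 0 < n)] at h0
  simp at h0

lemma natDegree_qpoly {n : ℕ} (hn : 1 ≤ n) : (qpoly n).natDegree = n - 1 := by
  apply le_antisymm
  · apply Polynomial.natDegree_sum_le_of_forall_le
    intro i hi
    simp only [Polynomial.natDegree_X_pow]
    exact Nat.le_sub_one_of_lt (Finset.mem_range.mp hi)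
  · apply Polynomial.le_natDegree_of_ne_zero
    rw [coeff_qpoly]
    simp only [if_pos (by omega : n - 1 < n)]
    norm_num

lemma coeff_qpoly_mul (q r m : ℕ) :
    (qpoly q * qpoly r).coeff m = ((min (m + 1) q - (m + 1 - r) : ℕ) : ℝ) := by
  rw [Polynomial.coeff_mul, Finset.Nat.sum_antidiagonal_eq_sum_range_succ_mk]
  have h : ∀ i ∈ Finset.range (m + 1),
      (qpoly q).coeff i * (qpoly r).coeff (m - i)
        = if i < q ∧ m - i < r then (1:ℝ) else 0 := by
    intro i _
    rw [coeff_qpoly, coeff_qpoly]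
    by_cases h1 : i < q <;> by_cases h2 : m - i < r <;> simp [h1, h2]
  rw [Finset.sum_congr rfl h, Finset.sum_boole]
  congr 1
  have h2 : (Finset.range (m+1)).filter (fun i => i < q ∧ m - i < r)
      = Finset.Ico (m + 1 - r) (min (m + 1) q) := by
    ext i
    simp only [Finset.mem_filter, Finset.mem_range, Finset.mem_Ico]
    omega
  rw [h2, Nat.card_Ico]

lemma qpoly_mul_X_sub_one (p : ℕ) : qpoly p * (X - 1) = X ^ p - 1 := by
  unfold qpoly; exact geom_sum_mul _ _

lemma coeff_diff (p q r k : ℕ) :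
    (qpoly p * qpoly q * qpoly r).coeff k - (qpoly p * qpoly q * qpoly r).coeff (k + 1)
      = (if p ≤ k + 1 then (qpoly q * qpoly r).coeff (k + 1 - p) else 0)
          - (qpoly q * qpoly r).coeff (k + 1) := by
  have e : (qpoly p * qpoly q * qpoly r) * (X - 1)
      = qpoly q * qpoly r * X ^ p - qpoly q * qpoly r := by
    have h2 : (qpoly p * qpoly q * qpoly r) * (X - 1)
        = qpoly q * qpoly r * (qpoly p * (X - 1)) := by ring
    rw [h2, qpoly_mul_X_sub_one]; ring
  have h3 := congrArg (fun P : Polynomial ℝ => P.coeff (k + 1)) e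
  simp only [mul_sub, mul_one, Polynomial.coeff_sub, Polynomial.coeff_mul_X,
    Polynomial.coeff_mul_X_pow'] at h3
  exact h3

theorem stableLength_zero_qpoly_mul (p q r : ℕ) (hr : 1 ≤ r) (hqr : r ≤ q) (hpq : q ≤ p)
    (hneg : p + 1 < q + r) (heven : Even (p + q + r - 3)) :
    StableLength (qpoly p * qpoly q * qpoly r) 0 ∧
      (∀ k : ℕ, 2 * k < p + q + r - 3 →
        (qpoly p * qpoly q * qpoly r).coeff k <
          (qpoly p * qpoly q * qpoly r).coeff (k + 1)) ∧
      (∀ k : ℕ, p + q + r - 3 ≤ 2 * k → k < p + q + r - 3 →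
        (qpoly p * qpoly q * qpoly r).coeff (k + 1) <
          (qpoly p * qpoly q * qpoly r).coeff k) := by
  obtain ⟨t, ht⟩ := heven
  have hq : 1 ≤ q := le_trans hr hqr
  have hp : 1 ≤ p := le_trans hq hpq
  have hdeg : (qpoly p * qpoly q * qpoly r).natDegree = p + q + r - 3 := by
    rw [Polynomial.natDegree_mul (mul_ne_zero (qpoly_ne_zero hp) (qpoly_ne_zero hq))
      (qpoly_ne_zero hr),
      Polynomial.natDegree_mul (qpoly_ne_zero hp) (qpoly_ne_zero hq),
      natDegree_qpoly hp, natDegree_qpoly hq, natDegree_qpoly hr]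
    omega
  have hinc : ∀ k : ℕ, 2 * k < p + q + r - 3 →
      (qpoly p * qpoly q * qpoly r).coeff k <
        (qpoly p * qpoly q * qpoly r).coeff (k + 1) := by
    intro k hk
    have hd := coeff_diff p q r k
    rw [coeff_qpoly_mul] at hd
    by_cases hpk : p ≤ k + 1
    · rw [if_pos hpk, coeff_qpoly_mul] at hd
      have key : (min (k + 1 - p + 1) q - (k + 1 - p + 1 - r) : ℕ)
          < min (k + 1 + 1) q - (k + 1 + 1 - r) := by omega
      have hc : ((min (k + 1 - p + 1) q - (k + 1 - p + 1 - r) : ℕ) : ℝ)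
          < ((min (k + 1 + 1) q - (k + 1 + 1 - r) : ℕ) : ℝ) := by exact_mod_cast key
      linarith
    · rw [if_neg hpk, coeff_qpoly_mul] at hd
      have key : (0 : ℕ) < min (k + 1 + 1) q - (k + 1 + 1 - r) := by omega
      have hc : (0 : ℝ) < ((min (k + 1 + 1) q - (k + 1 + 1 - r) : ℕ) : ℝ) := by
        exact_mod_cast key
      linarith
  have hdec : ∀ k : ℕ, p + q + r - 3 ≤ 2 * k → k < p + q + r - 3 →
      (qpoly p * qpoly q * qpoly r).coeff (k + 1) <
        (qpoly p * qpoly q * qpoly r).coeff k := by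
    intro k hk1 hk2
    have hd := coeff_diff p q r k
    have hpk : p ≤ k + 1 := by omega
    rw [coeff_qpoly_mul, if_pos hpk, coeff_qpoly_mul] at hd
    have key : (min (k + 1 + 1) q - (k + 1 + 1 - r) : ℕ)
        < min (k + 1 - p + 1) q - (k + 1 - p + 1 - r) := by omega
    have hc : ((min (k + 1 + 1) q - (k + 1 + 1 - r) : ℕ) : ℝ)
        < ((min (k + 1 - p + 1) q - (k + 1 - p + 1 - r) : ℕ) : ℝ) := by exact_mod_cast key
    linarith
  refine ⟨⟨⟨0, by omega, fun i hi => by rw [Nat.le_zero.mp hi]⟩, ?_⟩, hinc, hdec⟩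
  intro l' ⟨k0, hk0, hrun⟩
  by_contra hl
  push_neg at hl
  have h1 := hrun 1 hl
  rw [hdeg] at hk0
  by_cases hcase : 2 * k0 < p + q + r - 3
  · have := hinc k0 hcase
    linarith
  · have := hdec k0 (by omega) (by omega)
    linarith
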